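/- (Contraction scheme for the first Dirichlet eigenvalue of the semiclassical harmonic oscillator) Let f₀(z)=e^{-z²/2}, f₁ as above with f₁(√w) ∈ [-c₁^{-1} w^{-1/2} e^{w/2}, -c₁ w^{-1/2} e^{w/2}] for large w, and G₂(ν,w) = ν² R₂(ν,√w) with |∂_ν G₂(ν,w)| ≤ C w^{B} e^{w/2} ν for 0 ≤ ν ≤ 1. Define ν₁ = -f₀(√w)/f₁(√w) and ν_{n+1} = -(f₀(√w) + G₂(ν_n,w))/f₁(√w). Then there exist A > 2c₁^{-1} and w₀ such that for all w ≥ w₀: 0 < ν_n ≤ A w^{1/2} e^{-w} for all n, the sequence (ν_n) converges to a limit ν(w) ∈ (0, A w^{1/2} e^{-w}], and F(ν(w), w) := f₀(√w) + ν(w) f₁(√w) + G₂(ν(w), w) = 0. -/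

import Mathlib

open MeasureTheory Filter

/-- Contraction scheme for the first Dirichlet eigenvalue of the semiclassical harmonic
oscillator. With `f₀(z) = e^{-z²/2}`, `f₁(√w) ∈ [-c₁⁻¹ w^{-1/2} e^{w/2}, -c₁ w^{-1/2} e^{w/2}]`,
`G₂(ν,w) = ν² R₂(ν,√w)` with `|∂_ν G₂(ν,w)| ≤ C w^B e^{w/2} ν` on `0 ≤ ν ≤ 1`, the iteration
`ν₁ = -f₀(√w)/f₁(√w)`, `ν_{n+1} = -(f₀(√w) + G₂(ν_n,w))/f₁(√w)` satisfies, for suitable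
`A > 2c₁⁻¹` and all `w` large: `0 < ν_n ≤ A√w e^{-w}` for every `n ≥ 1`, the `ν_n` converge
to some `ν(w) ∈ (0, A√w e^{-w}]`, and `F(ν(w),w) = f₀(√w) + ν(w) f₁(√w) + G₂(ν(w),w) = 0`. -/
theorem stmt_19 (c₁ C B w₂ : ℝ) (hc₁ : 0 < c₁) (hc₁1 : c₁ ≤ 1) (hC : 0 < C) (hw₂ : 1 ≤ w₂)
    (f₁ : ℝ → ℝ) (R₂ : ℝ → ℝ → ℝ)
    (hf₁ : ∀ w ≥ w₂, f₁ (Real.sqrt w) ∈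
      Set.Icc (-c₁⁻¹ * Real.exp (w / 2) / Real.sqrt w) (-c₁ * Real.exp (w / 2) / Real.sqrt w))
    (hGdiff : ∀ w ≥ w₂, ContDiff ℝ 1 (fun t : ℝ => t ^ 2 * R₂ t (Real.sqrt w)))
    (hG : ∀ w ≥ w₂, ∀ ν ∈ Set.Icc (0 : ℝ) 1,
      |deriv (fun t : ℝ => t ^ 2 * R₂ t (Real.sqrt w)) ν|
        ≤ C * w ^ B * Real.exp (w / 2) * ν) :
    ∃ A w₀ : ℝ, 2 * c₁⁻¹ < A ∧ w₂ ≤ w₀ ∧ ∀ w ≥ w₀, ∀ ν : ℕ → ℝ,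
      ν 1 = -Real.exp (-w / 2) / f₁ (Real.sqrt w) →
      (∀ n ≥ 1, ν (n + 1)
          = -(Real.exp (-w / 2) + (ν n) ^ 2 * R₂ (ν n) (Real.sqrt w)) / f₁ (Real.sqrt w)) →
      (∀ n ≥ 1, 0 < ν n ∧ ν n ≤ A * Real.sqrt w * Real.exp (-w))
      ∧ ∃ νlim : ℝ, 0 < νlim ∧ νlim ≤ A * Real.sqrt w * Real.exp (-w)
          ∧ Tendsto (fun n => ν n) atTop (nhds νlim)
          ∧ Real.exp (-w / 2) + νlim * f₁ (Real.sqrt w)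
              + (νlim) ^ 2 * R₂ νlim (Real.sqrt w) = 0 := by
  have hc₁' : (0:ℝ) < c₁⁻¹ := inv_pos.mpr hc₁
  -- eventual smallness conditions
  have t1 : Tendsto (fun w : ℝ => w ^ (1:ℝ) * Real.exp (-1 * w)) atTop (nhds 0) :=
    tendsto_rpow_mul_exp_neg_mul_atTop_nhds_zero 1 1 one_pos
  have t2 : Tendsto (fun w : ℝ => w ^ (B + 1) * Real.exp (-1 * w)) atTop (nhds 0) :=
    tendsto_rpow_mul_exp_neg_mul_atTop_nhds_zero (B + 1) 1 one_pos
  have e1 : ∀ᶠ w : ℝ in atTop, w ^ (1:ℝ) * Real.exp (-1 * w) ≤ c₁ / 2 :=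
    t1.eventually (eventually_le_nhds (by positivity))
  have e2 : ∀ᶠ w : ℝ in atTop, w ^ (B + 1) * Real.exp (-1 * w) ≤ c₁ ^ 2 / (16 * C) :=
    t2.eventually (eventually_le_nhds (by positivity))
  obtain ⟨w₀', hw₀'⟩ := eventually_atTop.mp (e1.and e2)
  refine ⟨3 * c₁⁻¹, max w₀' w₂, by linarith, le_max_right _ _, ?_⟩
  intro w hw ν hν1 hrec
  have hww₂ : w₂ ≤ w := le_trans (le_max_right _ _) hw
  have hw1 : (1:ℝ) ≤ w := hw₂.trans hww₂
  have hwpos : (0:ℝ) < w := lt_of_lt_of_le one_pos hw1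
  obtain ⟨hcond1', hcond2'⟩ := hw₀' w (le_trans (le_max_left _ _) hw)
  have cond1 : w * Real.exp (-w) ≤ c₁ / 2 := by
    rw [Real.rpow_one, neg_one_mul] at hcond1'; exact hcond1'
  have cond2 : w ^ (B + 1) * Real.exp (-w) ≤ c₁ ^ 2 / (16 * C) := by
    rw [neg_one_mul] at hcond2'; exact hcond2'
  -- instantiate hypotheses
  have hf := hf₁ w hww₂
  have hGd := hGdiff w hww₂
  have hGb := hG w hww₂
  clear hf₁ hGdiff hG hcond1' hcond2' e1 e2 t1 t2 hw₀'
  obtain ⟨s, hs⟩ : ∃ x : ℝ, x = Real.sqrt w := ⟨_, rfl⟩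
  obtain ⟨en, hen⟩ : ∃ x : ℝ, x = Real.exp (-w) := ⟨_, rfl⟩
  obtain ⟨e2, he2⟩ : ∃ x : ℝ, x = Real.exp (w / 2) := ⟨_, rfl⟩
  obtain ⟨eh, heh⟩ : ∃ x : ℝ, x = Real.exp (-w / 2) := ⟨_, rfl⟩
  simp only [← hs, ← hen, ← he2, ← heh] at hν1 hrec hf hGd hGb cond1 cond2 ⊢
  obtain ⟨G, hGdef⟩ : ∃ g : ℝ → ℝ, g = fun t : ℝ => t ^ 2 * R₂ t s := ⟨_, rfl⟩
  rw [← hGdef] at hGd hGb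
  have hGapp : ∀ x : ℝ, G x = x ^ 2 * R₂ x s := fun x => by rw [hGdef]
  have hs0 : 0 < s := hs ▸ Real.sqrt_pos.mpr hwpos
  have hs1 : (1:ℝ) ≤ s := by rw [hs]; exact Real.one_le_sqrt.mpr hw1
  have hss : s * s = w := by rw [hs]; exact Real.mul_self_sqrt hwpos.le
  have hsw : s ≤ w := by
    calc s = 1 * s := (one_mul s).symm
      _ ≤ s * s := mul_le_mul_of_nonneg_right hs1 hs0.le
      _ = w := hss
  have hen0 : 0 < en := hen ▸ Real.exp_pos _
  have he20 : 0 < e2 := he2 ▸ Real.exp_pos _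
  have heh0 : 0 < eh := heh ▸ Real.exp_pos _
  have hexp : e2 * en = eh := by rw [he2, hen, heh, ← Real.exp_add]; congr 1; ring
  -- bounds on f₁
  obtain ⟨hfl, hfu⟩ := hf
  obtain ⟨P, hP⟩ : ∃ x : ℝ, x = -(f₁ s) := ⟨_, rfl⟩
  have hPlo : c₁ * e2 / s ≤ P := by
    rw [hP]; rw [neg_mul, neg_div] at hfu; linarith
  have hPhi : P ≤ c₁⁻¹ * e2 / s := by
    rw [hP]; rw [neg_mul, neg_div] at hfl; linarith
  have hP0 : 0 < P :=
    lt_of_lt_of_le (div_pos (mul_pos hc₁ he20) hs0) hPlo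
  -- constants
  obtain ⟨M, hM⟩ : ∃ x : ℝ, x = 2 * c₁⁻¹ * s * en := ⟨_, rfl⟩
  obtain ⟨L, hL⟩ : ∃ x : ℝ, x = c₁ * s * en / 2 := ⟨_, rfl⟩
  obtain ⟨K, hK⟩ : ∃ x : ℝ, x = C * w ^ B * e2 := ⟨_, rfl⟩
  rw [← hK] at hGb
  have hwB : (0:ℝ) < w ^ B := Real.rpow_pos_of_pos hwpos B
  have h2c : (0:ℝ) < 2 * c₁⁻¹ := by positivity
  have hM0 : 0 < M := by rw [hM]; exact mul_pos (mul_pos h2c hs0) hen0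
  have hL0 : 0 < L := by
    rw [hL]; exact div_pos (mul_pos (mul_pos hc₁ hs0) hen0) two_pos
  have hK0 : 0 < K := by rw [hK]; exact mul_pos (mul_pos hC hwB) he20
  have hq : w ^ B * w = w ^ (B + 1) := (Real.rpow_add_one hwpos.ne' B).symm
  have hc₁c : c₁⁻¹ * c₁ = 1 := inv_mul_cancel₀ hc₁.ne'
  have hM1 : M ≤ 1 := by
    have h1 : M ≤ 2 * c₁⁻¹ * w * en := by
      rw [hM]; exact mul_le_mul_of_nonneg_right
        (mul_le_mul_of_nonneg_left hsw h2c.le) hen0.le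
    have h2 : 2 * c₁⁻¹ * w * en = 2 * c₁⁻¹ * (w * en) := by ring
    have h3 : 2 * c₁⁻¹ * (w * en) ≤ 2 * c₁⁻¹ * (c₁ / 2) := by
      exact mul_le_mul_of_nonneg_left cond1 h2c.le
    have h4 : 2 * c₁⁻¹ * (c₁ / 2) = 1 := by field_simp
    linarith
  have hMA : M ≤ 3 * c₁⁻¹ * s * en := by
    rw [hM]
    exact mul_le_mul_of_nonneg_right
      (mul_le_mul_of_nonneg_right (by linarith : 2 * c₁⁻¹ ≤ 3 * c₁⁻¹) hs0.le) hen0.le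
  -- K*M*M ≤ eh/2
  have hKM2 : K * M * M ≤ eh / 2 := by
    have hc : K * M * M = 4 * C * c₁⁻¹ ^ 2 * (w ^ (B + 1) * en) * eh := by
      rw [hK, hM, ← hexp, ← hq, ← hss]; ring
    have hc' : 4 * C * c₁⁻¹ ^ 2 * (w ^ (B + 1) * en) * eh
        ≤ 4 * C * c₁⁻¹ ^ 2 * (c₁ ^ 2 / (16 * C)) * eh :=
      mul_le_mul_of_nonneg_right (mul_le_mul_of_nonneg_left cond2 (by positivity)) heh0.le
    have hc'' : 4 * C * c₁⁻¹ ^ 2 * (c₁ ^ 2 / (16 * C)) * eh = eh / 4 := by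
      field_simp; ring
    have hfin := hc'.trans_eq hc''
    rw [← hc] at hfin
    linarith
  -- contraction constant : 2 K M ≤ P
  have hcontr : 2 * (K * M) ≤ P := by
    have h1 : 2 * (K * M) ≤ c₁ * e2 / s := by
      rw [le_div_iff₀ hs0]
      have hc : 2 * (K * M) * s = 4 * C * c₁⁻¹ * (w ^ (B + 1) * en) * e2 := by
        rw [hK, hM, ← hq, ← hss]; ring
      have hc' : 4 * C * c₁⁻¹ * (w ^ (B + 1) * en) * e2
          ≤ 4 * C * c₁⁻¹ * (c₁ ^ 2 / (16 * C)) * e2 :=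
        mul_le_mul_of_nonneg_right (mul_le_mul_of_nonneg_left cond2 (by positivity)) he20.le
      have hc'' : 4 * C * c₁⁻¹ * (c₁ ^ 2 / (16 * C)) * e2 = c₁ * e2 / 4 := by
        field_simp; ring
      have hce : 0 < c₁ * e2 := mul_pos hc₁ he20
      have hfin := hc'.trans_eq hc''
      rw [← hc] at hfin
      linarith
    linarith
  -- properties of G
  have hGdiff' : ∀ x ∈ Set.Icc (0:ℝ) M, DifferentiableAt ℝ G x := fun x _ =>
    (hGd.differentiable one_ne_zero).differentiableAt
  have hGderiv : ∀ x ∈ Set.Icc (0:ℝ) M, ‖deriv G x‖ ≤ K * M := by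
    intro x hx
    rw [Real.norm_eq_abs]
    have h1 := hGb x ⟨hx.1, hx.2.trans hM1⟩
    have h2 : K * x ≤ K * M := mul_le_mul_of_nonneg_left hx.2 hK0.le
    exact h1.trans h2
  have hLip : ∀ x ∈ Set.Icc (0:ℝ) M, ∀ y ∈ Set.Icc (0:ℝ) M,
      |G y - G x| ≤ K * M * |y - x| := by
    intro x hx y hy
    have := Convex.norm_image_sub_le_of_norm_deriv_le hGdiff' hGderiv (convex_Icc 0 M) hx hy
    simpa [Real.norm_eq_abs] using this
  have hG0 : G 0 = 0 := by rw [hGdef]; simp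
  have hGabs : ∀ x ∈ Set.Icc (0:ℝ) M, |G x| ≤ eh / 2 := by
    intro x hx
    have h1 := hLip 0 ⟨le_rfl, hM0.le⟩ x hx
    rw [hG0, sub_zero, sub_zero] at h1
    have h2 : |x| ≤ M := by rw [abs_of_nonneg hx.1]; exact hx.2
    calc |G x| ≤ K * M * |x| := h1
      _ ≤ K * M * M := mul_le_mul_of_nonneg_left h2 (mul_pos hK0 hM0).le
      _ ≤ eh / 2 := hKM2
  -- range of the iteration map
  have hMP : 2 * eh ≤ c₁ * e2 / s * M := by
    have : c₁ * e2 / s * M = 2 * eh := by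
      rw [hM, ← hexp]; field_simp
    linarith
  have hLP : c₁⁻¹ * e2 / s * L ≤ eh / 2 := by
    have : c₁⁻¹ * e2 / s * L = eh / 2 := by
      rw [hL, ← hexp]; field_simp
    linarith
  have hTmem : ∀ x ∈ Set.Icc (0:ℝ) M, (eh + G x) / P ∈ Set.Icc L M := by
    intro x hx
    have hGx := hGabs x hx
    have hGx1 : G x ≤ eh / 2 := (le_abs_self _).trans hGx
    have hGx2 : -(eh / 2) ≤ G x := (neg_le_neg hGx).trans (neg_abs_le _)
    constructor
    · rw [le_div_iff₀ hP0]
      have h1 : L * P ≤ L * (c₁⁻¹ * e2 / s) := mul_le_mul_of_nonneg_left hPhi hL0.le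
      have h2 : L * (c₁⁻¹ * e2 / s) = c₁⁻¹ * e2 / s * L := by ring
      linarith
    · rw [div_le_iff₀ hP0]
      have h1 : M * (c₁ * e2 / s) ≤ M * P := mul_le_mul_of_nonneg_left hPlo hM0.le
      have h2 : M * (c₁ * e2 / s) = c₁ * e2 / s * M := by ring
      linarith
  have hLMs : Set.Icc L M ⊆ Set.Icc (0:ℝ) M := Set.Icc_subset_Icc hL0.le le_rfl
  -- contraction step
  have hstep : ∀ x ∈ Set.Icc (0:ℝ) M, ∀ y ∈ Set.Icc (0:ℝ) M,
      |(eh + G y) / P - (eh + G x) / P| ≤ (1/2) * |y - x| := by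
    intro x hx y hy
    have h1 : (eh + G y) / P - (eh + G x) / P = (G y - G x) / P := by
      rw [div_sub_div_same]; ring_nf
    rw [h1, abs_div, abs_of_pos hP0, div_le_iff₀ hP0]
    have h2 := hLip x hx y hy
    have h3 : K * M * |y - x| ≤ (P / 2) * |y - x| :=
      mul_le_mul_of_nonneg_right (by linarith) (abs_nonneg _)
    have h4 : (P / 2) * |y - x| = 1/2 * |y - x| * P := by ring
    linarith
  -- the shifted sequence
  obtain ⟨g, hg⟩ : ∃ g : ℕ → ℝ, g = fun n : ℕ => ν (n + 1) := ⟨_, rfl⟩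
  have hdivneg : ∀ a : ℝ, -a / f₁ s = a / P := by
    intro a; rw [hP, div_neg, neg_div]
  have hg0 : g 0 = (eh + G 0) / P := by
    simp only [hg, zero_add]
    rw [hν1, hG0, add_zero, hdivneg]
  have hgrec : ∀ n : ℕ, g (n + 1) = (eh + G (g n)) / P := by
    intro n
    simp only [hg]
    rw [hrec (n + 1) (by omega), hdivneg, hGapp]
  have hmem : ∀ n, g n ∈ Set.Icc L M := by
    intro n
    induction n with
    | zero => rw [hg0]; exact hTmem 0 ⟨le_rfl, hM0.le⟩
    | succ n ih => rw [hgrec n]; exact hTmem (g n) (hLMs ih)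
  -- Cauchy sequence via geometric bound
  have hdist : ∀ n, dist (g n) (g (n + 1)) ≤ M * (1/2) ^ n := by
    intro n
    induction n with
    | zero =>
      have h1 := hmem 0; have h2 := hmem 1
      rw [Real.dist_eq, pow_zero, mul_one, abs_sub_le_iff]
      exact ⟨by linarith [h1.2, h2.1, hL0], by linarith [h1.1, h2.2, hL0]⟩
    | succ n ih =>
      have h1 : dist (g (n + 1)) (g (n + 1 + 1)) ≤ (1/2) * dist (g n) (g (n + 1)) := by
        rw [hgrec (n + 1)]
        nth_rewrite 1 [hgrec n]
        rw [Real.dist_eq, Real.dist_eq]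
        exact hstep (g (n + 1)) (hLMs (hmem (n + 1))) (g n) (hLMs (hmem n))
      calc dist (g (n + 1)) (g (n + 1 + 1)) ≤ (1/2) * dist (g n) (g (n + 1)) := h1
        _ ≤ (1/2) * (M * (1/2) ^ n) := by
            linarith [dist_nonneg (x := g n) (y := g (n + 1))]
        _ = M * (1/2) ^ (n + 1) := by ring
  have hCauchy : CauchySeq g := cauchySeq_of_le_geometric (1/2) M (by norm_num) hdist
  obtain ⟨νl, hνl⟩ := cauchySeq_tendsto_of_complete hCauchy
  have hνlL : L ≤ νl := ge_of_tendsto' hνl fun n => (hmem n).1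
  have hνlM : νl ≤ M := le_of_tendsto' hνl fun n => (hmem n).2
  -- fixed point
  have hTc : Continuous fun x : ℝ => (eh + G x) / P :=
    (continuous_const.add hGd.continuous).div_const P
  have hlim1 : Tendsto (fun n => g (n + 1)) atTop (nhds νl) :=
    hνl.comp (tendsto_add_atTop_nat 1)
  have hlim2 : Tendsto (fun n => (eh + G (g n)) / P) atTop (nhds ((eh + G νl) / P)) :=
    (hTc.tendsto νl).comp hνl
  have hfix : νl = (eh + G νl) / P :=
    tendsto_nhds_unique (hlim1.congr fun n => hgrec n) hlim2
  have hfix' : eh + νl * f₁ s + νl ^ 2 * R₂ νl s = 0 := by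
    have h1 : νl * P = eh + G νl := by
      rw [eq_div_iff hP0.ne'] at hfix; exact hfix
    have h2 : G νl = νl ^ 2 * R₂ νl s := hGapp νl
    rw [hP] at h1
    rw [← h2]
    linarith
  constructor
  · intro n hn
    obtain ⟨m, rfl⟩ : ∃ m, n = m + 1 := ⟨n - 1, (Nat.succ_pred_eq_of_pos hn).symm⟩
    have hmm := hmem m
    simp only [hg] at hmm
    exact ⟨lt_of_lt_of_le hL0 hmm.1, hmm.2.trans hMA⟩
  · refine ⟨νl, lt_of_lt_of_le hL0 hνlL, hνlM.trans hMA, ?_, hfix'⟩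
    have hνl' : Tendsto (fun n : ℕ => ν (n + 1)) atTop (nhds νl) := hg ▸ hνl
    exact (tendsto_add_atTop_iff_nat 1).mp hνl'
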